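/- arXiv:2605.09475 — 2 statements merged into one kernel-verified Lean document; each statement's English description precedes it below -/
import Mathlib

section
/- Let (G, H) be an encoded Hamiltonian cubic 3-pole with distinguished degree-2 vertices v₁, v₂, v₃. If all three segments of H determined by v₁, v₂, v₃ have odd length, then (G, H) has a proper 4-cover. -/
open SimpleGraph

variable {V : Type*}

/-- Encoded Hamiltonian cubic 3-pole: `H` is a Hamiltonian cycle of `G`
(a connected spanning 2-regular subgraph), the three distinguished vertices
`v₁, v₂, v₃` are pairwise distinct and have degree 2 in `G`, and every other
vertex has degree 3 in `G`. -/
def IsHam3Pole (G H : SimpleGraph V) (v₁ v₂ v₃ : V) : Prop :=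
  H ≤ G ∧ H.Connected ∧ (∀ v : V, (H.neighborSet v).ncard = 2) ∧
  v₁ ≠ v₂ ∧ v₁ ≠ v₃ ∧ v₂ ≠ v₃ ∧
  (G.neighborSet v₁).ncard = 2 ∧ (G.neighborSet v₂).ncard = 2 ∧
  (G.neighborSet v₃).ncard = 2 ∧
  ∀ v : V, v ≠ v₁ → v ≠ v₂ → v ≠ v₃ → (G.neighborSet v).ncard = 3

/-- A proper 4-cover of the 3-pole `(G, H)`: three matchings `M₁, M₂, M₃` of `G`
such that `Mᵢ` saturates exactly the vertices other than `vᵢ`, and together with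
the chord set `Q = E(G) \ E(H)` they cover all edges of `G`. -/
def Proper4Cover (G H : SimpleGraph V) (v₁ v₂ v₃ : V) : Prop :=
  ∃ M₁ M₂ M₃ : G.Subgraph,
    M₁.IsMatching ∧ M₂.IsMatching ∧ M₃.IsMatching ∧
    M₁.verts = ({v₁}ᶜ : Set V) ∧ M₂.verts = ({v₂}ᶜ : Set V) ∧
    M₃.verts = ({v₃}ᶜ : Set V) ∧
    M₁.edgeSet ∪ M₂.edgeSet ∪ M₃.edgeSet ∪ (G.edgeSet \ H.edgeSet) = G.edgeSet

/-- A segment of `(G, H)`: a path along `H` whose endpoints are two distinct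
vertices among `v₁, v₂, v₃` and which contains no other vertex among them. -/
def IsSegment (G H : SimpleGraph V) (v₁ v₂ v₃ : V) {x y : V} (p : G.Walk x y) : Prop :=
  x ∈ ({v₁, v₂, v₃} : Set V) ∧ y ∈ ({v₁, v₂, v₃} : Set V) ∧ x ≠ y ∧
  p.IsPath ∧ (∀ e ∈ p.edges, e ∈ H.edgeSet) ∧
  ∀ w ∈ ({v₁, v₂, v₃} : Set V), w ∈ p.support → w = x ∨ w = y

/-- An exterior chord for a segment `p` from `x` to `y`: a chord of `(G, H)` having
exactly one endvertex on `p`, this endvertex being an internal vertex of `p`. -/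
def IsExteriorChord (G H : SimpleGraph V) {x y : V} (p : G.Walk x y) (e : Sym2 V) : Prop :=
  e ∈ G.edgeSet \ H.edgeSet ∧
  ∃ u w : V, e = s(u, w) ∧ u ∈ p.support ∧ w ∉ p.support ∧ u ≠ x ∧ u ≠ y

/-- An alternating circuit of `(G, H)`: a nonempty connected 2-regular subgraph `C`
of `G` such that at every vertex of `C` exactly one of the two incident edges of `C`
lies in `H` (hence the other is a chord): the edges alternate between `H` and chords. -/
def IsAlternatingCircuit (G H : SimpleGraph V) (C : G.Subgraph) : Prop :=
  C.verts.Nonempty ∧ C.Connected ∧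
  (∀ v ∈ C.verts, (C.neighborSet v).ncard = 2) ∧
  (∀ v ∈ C.verts, (C.neighborSet v ∩ H.neighborSet v).ncard = 1)

/-- There is a path of `H` from `u` to `w` all of whose internal vertices lie in
the vertex set of `C`. -/
def BridgePath (G H : SimpleGraph V) (C : G.Subgraph) (u w : V) : Prop :=
  ∃ p : G.Walk u w, p.IsPath ∧ (∀ e ∈ p.edges, e ∈ H.edgeSet) ∧
    ∀ x ∈ p.support, x ≠ u → x ≠ w → x ∈ C.verts

namespace Ham3Aux
variable {V : Type*} {H : SimpleGraph V}

lemma neigh_pair (hreg : ∀ v : V, (H.neighborSet v).ncard = 2) {v u : V} (hu : H.Adj v u) :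
    ∃! w, H.Adj v w ∧ w ≠ u := by
  obtain ⟨x, y, hxy, hset⟩ := Set.ncard_eq_two.mp (hreg v)
  have hx : H.Adj v x := by rw [← SimpleGraph.mem_neighborSet, hset]; simp
  have hy : H.Adj v y := by rw [← SimpleGraph.mem_neighborSet, hset]; simp
  have hmem : ∀ w, H.Adj v w → w = x ∨ w = y := by
    intro w hw
    rw [← SimpleGraph.mem_neighborSet, hset] at hw; simpa using hw
  rcases hmem u hu with rfl | rfl
  · refine ⟨y, ⟨hy, hxy.symm⟩, ?_⟩
    rintro w ⟨hw, hwne⟩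
    rcases hmem w hw with rfl | rfl
    · exact absurd rfl hwne
    · rfl
  · refine ⟨x, ⟨hx, hxy⟩, ?_⟩
    rintro w ⟨hw, hwne⟩
    rcases hmem w hw with rfl | rfl
    · rfl
    · exact absurd rfl hwne

variable (hreg : ∀ v : V, (H.neighborSet v).ncard = 2)

noncomputable def other (v u : V) : V :=
  @dite _ (H.Adj v u) (Classical.dec _) (fun h => (neigh_pair hreg h).exists.choose)
    (fun _ => v)

lemma other_spec {v u : V} (h : H.Adj v u) :
    H.Adj v (other hreg v u) ∧ other hreg v u ≠ u := by
  rw [other, dif_pos h]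
  exact (neigh_pair hreg h).exists.choose_spec

lemma other_unique {v u w : V} (h : H.Adj v u) (hw : H.Adj v w) (hne : w ≠ u) :
    w = other hreg v u := by
  obtain ⟨c, hc, huniq⟩ := neigh_pair hreg h
  have h1 := huniq w ⟨hw, hne⟩
  have h2 := huniq _ (other_spec hreg h)
  rw [h1, h2]

variable (v₀ : V)

noncomputable def nb0 : V :=
  (Set.nonempty_of_ncard_ne_zero (by rw [hreg v₀]; omega)).choose

lemma nb0_adj : H.Adj v₀ (nb0 hreg v₀) :=
  (Set.nonempty_of_ncard_ne_zero (s := H.neighborSet v₀) (by rw [hreg v₀]; omega)).choose_spec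

noncomputable def stp : V × V → V × V := fun p => (p.2, other hreg p.2 p.1)

noncomputable def pr (k : ℕ) : V × V := (stp hreg)^[k] (v₀, nb0 hreg v₀)

noncomputable def gs (k : ℕ) : V := (pr hreg v₀ k).1

lemma gs_zero : gs hreg v₀ 0 = v₀ := rfl

lemma pr_fst (k : ℕ) : (pr hreg v₀ k).1 = gs hreg v₀ k := rfl

lemma pr_snd (k : ℕ) : (pr hreg v₀ k).2 = gs hreg v₀ (k + 1) := by
  show _ = (pr hreg v₀ (k + 1)).1
  show _ = ((stp hreg)^[k + 1] _).1
  rw [Function.iterate_succ_apply']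
  rfl

lemma gs_succ_succ (k : ℕ) :
    gs hreg v₀ (k + 2) = other hreg (gs hreg v₀ (k + 1)) (gs hreg v₀ k) := by
  have h1 : gs hreg v₀ (k + 2) = (pr hreg v₀ (k + 1)).2 := (pr_snd hreg v₀ (k + 1)).symm
  have h2 : pr hreg v₀ (k + 1) = stp hreg (pr hreg v₀ k) := by
    show (stp hreg)^[k + 1] _ = _
    rw [Function.iterate_succ_apply']
    rfl
  rw [h1, h2, stp, pr_fst, pr_snd]

lemma gs_adj (k : ℕ) : H.Adj (gs hreg v₀ k) (gs hreg v₀ (k + 1)) := by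
  induction k with
  | zero => exact nb0_adj hreg v₀
  | succ k ih =>
    rw [gs_succ_succ]
    exact (other_spec hreg ih.symm).1

lemma gs_nb (k : ℕ) : gs hreg v₀ (k + 2) ≠ gs hreg v₀ k := by
  rw [gs_succ_succ]
  exact (other_spec hreg (gs_adj hreg v₀ k).symm).2

lemma gs_backstep (k : ℕ) :
    gs hreg v₀ k = other hreg (gs hreg v₀ (k + 1)) (gs hreg v₀ (k + 2)) :=
  other_unique hreg (gs_adj hreg v₀ (k + 1)) (gs_adj hreg v₀ k).symm (gs_nb hreg v₀ k).symm

lemma pr_back {k d : ℕ} (h : pr hreg v₀ (k + 1) = pr hreg v₀ (k + 1 + d)) :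
    pr hreg v₀ k = pr hreg v₀ (k + d) := by
  have h1 : gs hreg v₀ (k + 1) = gs hreg v₀ (k + d + 1) := by
    have := congrArg Prod.fst h
    simpa [pr_fst, show k + 1 + d = k + d + 1 by omega] using this
  have h2 : gs hreg v₀ (k + 2) = gs hreg v₀ (k + d + 2) := by
    have := congrArg Prod.snd h
    simpa [pr_snd, show k + 1 + d + 1 = k + d + 2 by omega] using this
  have hfst : gs hreg v₀ k = gs hreg v₀ (k + d) := by
    rw [gs_backstep hreg v₀ k, gs_backstep hreg v₀ (k + d), h1, h2]
  exact Prod.ext (by simpa [pr_fst] using hfst) (by simpa [pr_snd] using h1)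

lemma collision_period {i j : ℕ} (hij : i < j) (hcol : pr hreg v₀ i = pr hreg v₀ j) :
    ∀ k, pr hreg v₀ k = pr hreg v₀ (k + (j - i)) := by
  have fwd : ∀ t, pr hreg v₀ (i + t) = pr hreg v₀ (i + t + (j - i)) := by
    intro t
    have : ∀ s : ℕ, pr hreg v₀ (s + t) = (stp hreg)^[t] (pr hreg v₀ s) := by
      intro s
      rw [pr, pr, Nat.add_comm, Function.iterate_add_apply]
    rw [this i, show i + t + (j - i) = j + t by omega, this j, hcol]
  have down : ∀ t, pr hreg v₀ (i - t) = pr hreg v₀ (i - t + (j - i)) := by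
    intro t
    induction t with
    | zero => simpa using fwd 0
    | succ t ih =>
      rcases Nat.lt_or_ge t i with h | h
      · exact pr_back hreg v₀ (by rwa [show i - (t+1) + 1 = i - t by omega])
      · rwa [show i - (t + 1) = i - t by omega]
  intro k
  rcases Nat.lt_or_ge k i with h | h
  · have := down (i - k)
    rwa [show i - (i - k) = k by omega] at this
  · have := fwd (k - i)
    rwa [show i + (k - i) = k by omega] at this

end Ham3Aux

open SimpleGraph
namespace Ham3Aux
variable {V : Type*} {H : SimpleGraph V}

lemma exists_cycle_param [Finite V] (hconn : H.Connected)
    (hreg : ∀ v : V, (H.neighborSet v).ncard = 2) (v₀ : V) :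
    ∃ (m : ℕ) (f : ZMod m → V), 3 ≤ m ∧ Function.Bijective f ∧ f 0 = v₀ ∧
      (∀ i, H.Adj (f i) (f (i + 1))) ∧
      (∀ e ∈ H.edgeSet, ∃ i, e = s(f i, f (i + 1))) := by
  classical
  obtain ⟨x, y, hxy, hprxy⟩ := Finite.exists_ne_map_eq_of_infinite (pr hreg v₀)
  have hP : ∃ d, 0 < d ∧ ∀ k, pr hreg v₀ k = pr hreg v₀ (k + d) := by
    rcases Nat.lt_or_ge x y with hlt | hge
    · exact ⟨y - x, by omega, collision_period hreg v₀ hlt hprxy⟩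
    · have hlt : y < x := by omega
      exact ⟨x - y, by omega, collision_period hreg v₀ hlt hprxy.symm⟩
  set m := Nat.find hP with hmdef
  obtain ⟨hmpos, hper⟩ := Nat.find_spec hP
  have hmin : ∀ d, d < m → ¬(0 < d ∧ ∀ k, pr hreg v₀ k = pr hreg v₀ (k + d)) :=
    fun d hd => Nat.find_min hP (by rw [← hmdef]; exact hd)
  rw [← hmdef] at hmpos hper
  clear_value m
  have gper : ∀ k, gs hreg v₀ (k + m) = gs hreg v₀ k :=
    fun k => (congrArg Prod.fst (hper k)).symm
  have gmul : ∀ t k, gs hreg v₀ k = gs hreg v₀ (k + t * m) := by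
    intro t
    induction t with
    | zero => simp
    | succ t ih =>
      intro k
      rw [ih k, show k + (t + 1) * m = k + t * m + m by ring, gper]
  have gmod : ∀ k, gs hreg v₀ (k % m) = gs hreg v₀ k := by
    intro k
    calc gs hreg v₀ (k % m) = gs hreg v₀ (k % m + k / m * m) := gmul _ _
      _ = gs hreg v₀ k := by rw [Nat.mod_add_div']
  have hm3 : 3 ≤ m := by
    have h1 : gs hreg v₀ 0 = gs hreg v₀ m := by
      have := congrArg Prod.fst (hper 0); rw [Nat.zero_add] at this; exact this
    rcases Nat.lt_or_ge m 3 with h | h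
    · interval_cases m
      · exact absurd h1 (gs_adj hreg v₀ 0).ne
      · exact absurd h1.symm (gs_nb hreg v₀ 0)
    · exact h
  haveI : NeZero m := ⟨by omega⟩
  set f : ZMod m → V := fun i => gs hreg v₀ i.val with hfdef
  have flift : ∀ k : ℕ, f (k : ZMod m) = gs hreg v₀ k := by
    intro k
    show gs hreg v₀ ((k : ZMod m)).val = _
    rw [ZMod.val_natCast, gmod]
  have vcast : ∀ i : ZMod m, ((i.val : ℕ) : ZMod m) = i := ZMod.natCast_rightInverse
  have hadjf : ∀ i : ZMod m, H.Adj (f i) (f (i + 1)) := by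
    intro i
    have e1 : f (i + 1) = gs hreg v₀ (i.val + 1) := by
      rw [← flift (i.val + 1)]
      congr 1
      push_cast [vcast]
      ring
    rw [e1]
    exact gs_adj hreg v₀ i.val
  have hnbf : ∀ i : ZMod m, f (i - 1) ≠ f (i + 1) := by
    intro i
    have h1 : i - 1 = (((i - 1).val : ℕ) : ZMod m) := (vcast _).symm
    have h2 : i + 1 = ((((i - 1).val + 2 : ℕ)) : ZMod m) := by
      push_cast [vcast]
      ring
    rw [h1, h2, flift, flift]
    exact (gs_nb hreg v₀ _).symm
  have hadjf' : ∀ i : ZMod m, H.Adj (f i) (f (i - 1)) := by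
    intro i
    have h := hadjf (i - 1)
    rw [sub_add_cancel] at h
    exact h.symm
  have nbhdf : ∀ i : ZMod m, H.neighborSet (f i) = {f (i - 1), f (i + 1)} := by
    intro i
    refine (Set.eq_of_subset_of_ncard_le ?_ ?_ (Set.toFinite _)).symm
    · rintro w (rfl | rfl)
      · exact hadjf' i
      · exact hadjf i
    · rw [hreg, Set.ncard_pair (hnbf i)]
  have hsurj : Function.Surjective f := by
    have hadjcl : ∀ u w, H.Adj u w → u ∈ Set.range f → w ∈ Set.range f := by
      rintro u w hadj ⟨i, rfl⟩
      have hw : w ∈ H.neighborSet (f i) := hadj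
      rw [nbhdf] at hw
      rcases hw with rfl | rfl
      · exact ⟨i - 1, rfl⟩
      · exact ⟨i + 1, rfl⟩
    intro v
    obtain ⟨w⟩ := hconn.preconnected (f 0) v
    have key : ∀ {a b : V} (_ : H.Walk a b), a ∈ Set.range f → b ∈ Set.range f := by
      intro a b w
      induction w with
      | nil => exact id
      | cons h p ih => exact fun ha => ih (hadjcl _ _ h ha)
    exact key w ⟨0, rfl⟩
  have hinj : Function.Injective f := by
    intro aa bb hab
    by_contra hne
    have hmem : f (aa + 1) ∈ H.neighborSet (f bb) := by
      have := hadjf aa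
      rw [hab] at this
      exact this
    rw [nbhdf] at hmem
    rcases hmem with hcase | hcase
    swap
    · -- forward case : f (aa+1) = f (bb+1)
      have c1 : gs hreg v₀ aa.val = gs hreg v₀ bb.val := hab
      have eaa : f (aa + 1) = gs hreg v₀ (aa.val + 1) := by
        rw [← flift (aa.val + 1)]; congr 1; push_cast [vcast]; ring
      have ebb : f (bb + 1) = gs hreg v₀ (bb.val + 1) := by
        rw [← flift (bb.val + 1)]; congr 1; push_cast [vcast]; ring
      have c2 : gs hreg v₀ (aa.val + 1) = gs hreg v₀ (bb.val + 1) := by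
        rw [← eaa, ← ebb, hcase]
      have hcol : pr hreg v₀ aa.val = pr hreg v₀ bb.val := by
        refine Prod.ext ?_ ?_
        · simpa [pr_fst] using c1
        · simpa [pr_snd] using c2
      have hvne : aa.val ≠ bb.val := by
        intro hv
        exact hne (by rw [← vcast aa, hv, vcast])
      have hblt := ZMod.val_lt aa
      have hclt := ZMod.val_lt bb
      rcases Nat.lt_or_ge aa.val bb.val with hlt | hge
      · exact hmin _ (show bb.val - aa.val < m by omega)
          ⟨by omega, collision_period hreg v₀ hlt hcol⟩
      · have hlt : bb.val < aa.val := by omega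
        exact hmin _ (show aa.val - bb.val < m by omega)
          ⟨by omega, collision_period hreg v₀ hlt hcol.symm⟩
    · -- reflection case : f (aa+1) = f (bb-1)
      have fwdf : ∀ i : ZMod m, f (i + 1) = other hreg (f i) (f (i - 1)) :=
        fun i => other_unique hreg (hadjf' i) (hadjf i) (hnbf i).symm
      have bwdf : ∀ i : ZMod m, f (i - 1) = other hreg (f i) (f (i + 1)) :=
        fun i => other_unique hreg (hadjf i) (hadjf' i) (hnbf i)
      have R : ∀ t : ℕ, f (aa + (t : ZMod m)) = f (bb - (t : ZMod m)) ∧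
          f (aa + ((t + 1 : ℕ) : ZMod m)) = f (bb - ((t + 1 : ℕ) : ZMod m)) := by
        intro t
        induction t with
        | zero =>
          constructor
          · simpa using hab
          · simpa using hcase
        | succ t ih =>
          refine ⟨ih.2, ?_⟩
          have e1 : f (aa + ((t + 2 : ℕ) : ZMod m)) =
              other hreg (f (aa + ((t + 1 : ℕ) : ZMod m))) (f (aa + (t : ZMod m))) := by
            have := fwdf (aa + ((t + 1 : ℕ) : ZMod m))
            rw [show aa + ((t + 1 : ℕ) : ZMod m) + 1 = aa + ((t + 2 : ℕ) : ZMod m) by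
                push_cast; ring,
              show aa + ((t + 1 : ℕ) : ZMod m) - 1 = aa + (t : ZMod m) by push_cast; ring] at this
            exact this
          have e2 : f (bb - ((t + 2 : ℕ) : ZMod m)) =
              other hreg (f (bb - ((t + 1 : ℕ) : ZMod m))) (f (bb - (t : ZMod m))) := by
            have := bwdf (bb - ((t + 1 : ℕ) : ZMod m))
            rw [show bb - ((t + 1 : ℕ) : ZMod m) - 1 = bb - ((t + 2 : ℕ) : ZMod m) by
                push_cast; ring,
              show bb - ((t + 1 : ℕ) : ZMod m) + 1 = bb - (t : ZMod m) by push_cast; ring] at this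
            exact this
          rw [show ((t + 1 + 1 : ℕ) : ZMod m) = ((t + 2 : ℕ) : ZMod m) by push_cast; ring, e1, e2,
            ih.1, ih.2]
      have R' : ∀ z : ZMod m, f z = f (aa + bb - z) := by
        intro z
        have h1 := (R (z - aa).val).1
        rw [vcast] at h1
        calc f z = f (aa + (z - aa)) := by ring_nf
          _ = f (bb - (z - aa)) := h1
          _ = f (aa + bb - z) := by ring_nf
      rcases Nat.even_or_odd (aa + bb).val with hev | hod
      · have h2i : ((((aa + bb).val / 2 : ℕ)) : ZMod m) + (((aa + bb).val / 2 : ℕ)) =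
            aa + bb := by
          rw [← Nat.cast_add, show (aa + bb).val / 2 + (aa + bb).val / 2 = (aa + bb).val by
            rw [Nat.even_iff] at hev; omega, vcast]
        set i : ZMod m := ((((aa + bb).val / 2 : ℕ)) : ZMod m) with hidef
        have hz := R' (i + 1)
        rw [show aa + bb - (i + 1) = i - 1 by rw [← h2i]; ring] at hz
        exact hnbf i hz.symm
      · have h2i : ((((aa + bb).val / 2 : ℕ)) : ZMod m) + (((aa + bb).val / 2 : ℕ)) + 1 =
            aa + bb := by
          rw [← Nat.cast_add, ← Nat.cast_one, ← Nat.cast_add,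
            show (aa + bb).val / 2 + (aa + bb).val / 2 + 1 = (aa + bb).val by
              rw [Nat.odd_iff] at hod; omega, vcast]
        set i : ZMod m := ((((aa + bb).val / 2 : ℕ)) : ZMod m) with hidef
        have hz := R' i
        rw [show aa + bb - i = i + 1 by rw [← h2i]; ring] at hz
        exact (hadjf i).ne hz
  have hedge : ∀ e ∈ H.edgeSet, ∃ i, e = s(f i, f (i + 1)) := by
    intro e
    refine Sym2.ind (fun x y he => ?_) e
    rw [SimpleGraph.mem_edgeSet] at he
    obtain ⟨i, rfl⟩ := hsurj x
    have hy : y ∈ H.neighborSet (f i) := he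
    rw [nbhdf] at hy
    rcases hy with rfl | rfl
    · exact ⟨i - 1, by rw [sub_add_cancel]; exact Sym2.eq_swap⟩
    · exact ⟨i, rfl⟩
  have hf0 : f 0 = v₀ := by
    show gs hreg v₀ ((0 : ZMod m)).val = v₀
    rw [ZMod.val_zero]
    rfl
  exact ⟨m, f, hm3, ⟨hinj, hsurj⟩, hf0, hadjf, hedge⟩

end Ham3Aux
namespace Ham3Aux
variable {V : Type*} {G : SimpleGraph V} (fn : ℕ → V)
  (hadj' : ∀ k, G.Adj (fn k) (fn (k + 1)))

def fwalk : (l s : ℕ) → G.Walk (fn s) (fn (s + l))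
  | 0, _ => SimpleGraph.Walk.nil
  | l + 1, s =>
    (SimpleGraph.Walk.cons (hadj' s) (fwalk l (s + 1))).copy rfl
      (congrArg fn (by omega))

lemma fwalk_length : ∀ l s, (fwalk fn hadj' l s).length = l
  | 0, _ => rfl
  | l + 1, s => by
    rw [fwalk, SimpleGraph.Walk.length_copy, SimpleGraph.Walk.length_cons,
      fwalk_length l (s + 1)]

lemma fwalk_support : ∀ l s,
    (fwalk fn hadj' l s).support = (List.range (l + 1)).map (fun j => fn (s + j))
  | 0, s => by simp [fwalk, List.range_succ]
  | l + 1, s => by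
    rw [fwalk, SimpleGraph.Walk.support_copy, SimpleGraph.Walk.support_cons,
      fwalk_support l (s + 1), List.range_succ_eq_map (n := l + 1), List.map_cons,
      List.map_map]
    congr 1
    apply List.map_congr_left
    intro j _
    simp only [Function.comp_apply, Nat.succ_eq_add_one]
    rw [show s + 1 + j = s + (j + 1) from by omega]

lemma fwalk_edges : ∀ l s,
    (fwalk fn hadj' l s).edges = (List.range l).map (fun j => s(fn (s + j), fn (s + j + 1)))
  | 0, s => by simp [fwalk]
  | l + 1, s => by
    rw [fwalk, SimpleGraph.Walk.edges_copy, SimpleGraph.Walk.edges_cons,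
      fwalk_edges l (s + 1), List.range_succ_eq_map (n := l), List.map_cons, List.map_map]
    congr 1
    apply List.map_congr_left
    intro j _
    simp only [Function.comp_apply, Nat.succ_eq_add_one]
    rw [show s + 1 + j = s + (j + 1) from by omega]

end Ham3Aux
namespace Ham3Aux
open SimpleGraph
variable {V : Type*}

lemma match_lemma {m : ℕ} (hm : 3 ≤ m) (hmo : Odd m) {f : ZMod m → V}
    (hfb : Function.Bijective f) {G H : SimpleGraph V} (hHG : H ≤ G)
    (hadjf : ∀ i, H.Adj (f i) (f (i + 1))) (p : ZMod m) :
    ∃ M : G.Subgraph, M.IsMatching ∧ M.verts = {f p}ᶜ ∧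
      ∀ i : ZMod m, Odd ((i - p).val) → s(f i, f (i + 1)) ∈ M.edgeSet := by
  haveI : NeZero m := ⟨by omega⟩
  have hfi := hfb.1
  have vcast : ∀ i : ZMod m, ((i.val : ℕ) : ZMod m) = i := ZMod.natCast_rightInverse
  have hcast : ∀ s t : ℕ, s < m → t < m → ((s : ZMod m) = (t : ZMod m)) → s = t := by
    intro s t hs ht h
    have h2 := congrArg ZMod.val h
    rwa [ZMod.val_natCast, ZMod.val_natCast, Nat.mod_eq_of_lt hs, Nat.mod_eq_of_lt ht] at h2
  have hcore : ∀ j : ℕ,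
      G.Adj (f (p + ((2*j+1 : ℕ) : ZMod m))) (f (p + ((2*j+2 : ℕ) : ZMod m))) := by
    intro j
    have h := hHG (hadjf (p + ((2*j+1 : ℕ) : ZMod m)))
    rwa [show p + ((2*j+1 : ℕ) : ZMod m) + 1 = p + ((2*j+2 : ℕ) : ZMod m) by
      push_cast; ring] at h
  have hvne : ∀ t : ℕ, 0 < t → t < m → f (p + (t : ZMod m)) ≠ f p := by
    intro t h1 h2 heq
    have h3 : (t : ZMod m) = 0 := by
      have := hfi heq
      have h4 : p + (t : ZMod m) - p = p - p := by rw [this]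
      rwa [add_sub_cancel_left, sub_self] at h4
    have h5 := congrArg ZMod.val h3
    rw [ZMod.val_natCast, Nat.mod_eq_of_lt h2, ZMod.val_zero] at h5
    omega
  refine ⟨{ verts := {f p}ᶜ,
            Adj := fun x y => ∃ j : ℕ, 2 * j + 2 < m ∧
              s(x, y) = s(f (p + ((2*j+1 : ℕ) : ZMod m)), f (p + ((2*j+2 : ℕ) : ZMod m))),
            adj_sub := ?_, edge_vert := ?_, symm := ?_ }, ?_, rfl, ?_⟩
  · rintro x y ⟨j, hj, hs⟩
    rcases Sym2.eq_iff.mp hs with ⟨rfl, rfl⟩ | ⟨rfl, rfl⟩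
    · exact hcore j
    · exact (hcore j).symm
  · rintro x y ⟨j, hj, hs⟩
    have hx : x = f (p + ((2*j+1 : ℕ) : ZMod m)) ∨ x = f (p + ((2*j+2 : ℕ) : ZMod m)) := by
      rcases Sym2.eq_iff.mp hs with ⟨h1, _⟩ | ⟨h1, _⟩
      · exact Or.inl h1
      · exact Or.inr h1
    simp only [Set.mem_compl_iff, Set.mem_singleton_iff]
    rcases hx with rfl | rfl
    · exact hvne _ (by omega) (by omega)
    · exact hvne _ (by omega) (by omega)
  · refine ⟨?_⟩; rintro x y ⟨j, hj, hs⟩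
    exact ⟨j, hj, by rw [Sym2.eq_swap]; exact hs⟩
  · -- IsMatching
    intro v hv
    obtain ⟨q, rfl⟩ := hfb.2 v
    have hq : q ≠ p := by
      intro h
      exact hv (by simp [h])
    set t := (q - p).val with htdef
    have htm : t < m := ZMod.val_lt _
    have ht0 : t ≠ 0 := by
      intro h
      apply hq
      have h1 : q - p = 0 := by
        rw [← vcast (q - p), ← htdef, h]
        simp
      exact sub_eq_zero.mp h1
    have hqt : q = p + (t : ZMod m) := by
      rw [htdef, vcast]
      ring
    have hqoff : ∀ u : ℕ, u < m → f q = f (p + (u : ZMod m)) → t = u := by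
      intro u hu heq
      have h1 : (t : ZMod m) = (u : ZMod m) := by
        have h2 := hfi heq
        rw [hqt] at h2
        exact add_left_cancel h2
      exact hcast t u htm hu h1
    rcases Nat.even_or_odd t with hev | hod
    · -- t even, pair with t - 1
      have ht2 : 2 ≤ t := by rw [Nat.even_iff] at hev; omega
      refine ⟨f (p + ((t - 1 : ℕ) : ZMod m)), ⟨t/2 - 1, by rw [Nat.even_iff] at hev; omega, ?_⟩, ?_⟩
      · rw [show 2 * (t/2 - 1) + 1 = t - 1 by rw [Nat.even_iff] at hev; omega,
          show 2 * (t/2 - 1) + 2 = t by rw [Nat.even_iff] at hev; omega, ← hqt]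
        exact Sym2.eq_swap
      · rintro w' ⟨j', hj', hs'⟩
        rcases Sym2.eq_iff.mp hs' with ⟨h1, h2⟩ | ⟨h1, h2⟩
        · exfalso
          have := hqoff _ (by omega) h1
          rw [Nat.even_iff] at hev
          omega
        · have := hqoff _ (by omega) h1
          rw [h2, show 2 * j' + 1 = t - 1 by omega]
    · -- t odd, pair with t + 1
      have ht1 : t + 1 < m := by
        rw [Nat.odd_iff] at hod
        rcases hmo with ⟨mm, hmm⟩
        omega
      refine ⟨f (p + ((t + 1 : ℕ) : ZMod m)), ⟨t/2, by rw [Nat.odd_iff] at hod; omega, ?_⟩, ?_⟩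
      · rw [show 2 * (t/2) + 1 = t by rw [Nat.odd_iff] at hod; omega,
          show 2 * (t/2) + 2 = t + 1 by rw [Nat.odd_iff] at hod; omega, ← hqt]
      · rintro w' ⟨j', hj', hs'⟩
        rcases Sym2.eq_iff.mp hs' with ⟨h1, h2⟩ | ⟨h1, h2⟩
        · have := hqoff _ (by omega) h1
          rw [h2, show 2 * j' + 2 = t + 1 by omega]
        · exfalso
          have := hqoff _ (by omega) h1
          rw [Nat.odd_iff] at hod
          omega
  · -- cover
    intro i hodd
    set t := (i - p).val with htdef
    have htm : t < m := ZMod.val_lt _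
    have ht1 : t + 1 < m := by
      rw [Nat.odd_iff] at hodd
      rcases hmo with ⟨mm, hmm⟩
      omega
    have hit : i = p + (t : ZMod m) := by
      rw [htdef, vcast]
      ring
    rw [Subgraph.mem_edgeSet]
    refine ⟨t/2, by rw [Nat.odd_iff] at hodd; omega, ?_⟩
    rw [show 2 * (t/2) + 1 = t by rw [Nat.odd_iff] at hodd; omega,
      show 2 * (t/2) + 2 = t + 1 by rw [Nat.odd_iff] at hodd; omega, ← hit,
      show p + ((t + 1 : ℕ) : ZMod m) = i + 1 by rw [hit]; push_cast; ring]

end Ham3Aux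
namespace Ham3Aux
open SimpleGraph
variable {V : Type*}

lemma key (G H : SimpleGraph V) (v₁ vB vC : V) {m : ℕ} {f : ZMod m → V}
    (hm : 3 ≤ m) (hfb : Function.Bijective f) (hf0 : f 0 = v₁)
    (hadjf : ∀ i, H.Adj (f i) (f (i + 1)))
    (hedge : ∀ e ∈ H.edgeSet, ∃ i, e = s(f i, f (i + 1)))
    (hHG : H ≤ G)
    (h12 : v₁ ≠ vB) (h13 : v₁ ≠ vC) (h23 : vB ≠ vC)
    {pB pC : ZMod m} (hfpB : f pB = vB) (hfpC : f pC = vC)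
    (hab : pB.val < pC.val)
    (hodd : ∀ (x y : V) (p : G.Walk x y),
      (x ∈ ({v₁, vB, vC} : Set V) ∧ y ∈ ({v₁, vB, vC} : Set V) ∧ x ≠ y ∧
        p.IsPath ∧ (∀ e ∈ p.edges, e ∈ H.edgeSet) ∧
        ∀ w ∈ ({v₁, vB, vC} : Set V), w ∈ p.support → w = x ∨ w = y) → Odd p.length) :
    ∃ M₁ M₂ M₃ : G.Subgraph,
      M₁.IsMatching ∧ M₂.IsMatching ∧ M₃.IsMatching ∧
      M₁.verts = ({v₁}ᶜ : Set V) ∧ M₂.verts = ({vB}ᶜ : Set V) ∧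
      M₃.verts = ({vC}ᶜ : Set V) ∧
      M₁.edgeSet ∪ M₂.edgeSet ∪ M₃.edgeSet ∪ (G.edgeSet \ H.edgeSet) = G.edgeSet := by
  haveI : NeZero m := ⟨by omega⟩
  have hfi := hfb.1
  have vcast : ∀ i : ZMod m, ((i.val : ℕ) : ZMod m) = i := ZMod.natCast_rightInverse
  set a := pB.val with hadef
  set b := pC.val with hbdef
  have hbm : b < m := ZMod.val_lt _
  have ha0 : a ≠ 0 := by
    intro h
    apply h12
    rw [← hf0, ← hfpB, ← vcast pB, ← hadef, h, Nat.cast_zero]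
  set fn : ℕ → V := fun k => f ((k : ℕ) : ZMod m) with hfndef
  have hadj' : ∀ k, G.Adj (fn k) (fn (k + 1)) := by
    intro k
    have h := hHG (hadjf ((k : ℕ) : ZMod m))
    rwa [show ((k : ℕ) : ZMod m) + 1 = ((k + 1 : ℕ) : ZMod m) by push_cast; ring] at h
  have hwin : ∀ u v : ℕ, u < v → v - u < m → fn u ≠ fn v := by
    intro u v h1 h2 heq
    have h3 : (u : ZMod m) = (v : ZMod m) := hfi heq
    have h4 := (ZMod.natCast_eq_natCast_iff u v m).mp h3
    have h5 := (Nat.modEq_iff_dvd' (le_of_lt h1)).mp h4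
    have h6 := Nat.le_of_dvd (by omega) h5
    omega
  have hnodup : ∀ l s : ℕ, l < m → ((fwalk fn hadj' l s).support).Nodup := by
    intro l s hl
    rw [fwalk_support]
    refine List.Nodup.map_on ?_ List.nodup_range
    intro j1 h1 j2 h2 heq
    rw [List.mem_range] at h1 h2
    by_contra hne
    rcases Nat.lt_or_ge j1 j2 with hlt | hge
    · exact hwin (s + j1) (s + j2) (by omega) (by omega) heq
    · exact hwin (s + j2) (s + j1) (by omega) (by omega) heq.symm
  have mkOdd : ∀ (s l : ℕ), 0 < l → l < m →
      fn s ∈ ({v₁, vB, vC} : Set V) → fn (s + l) ∈ ({v₁, vB, vC} : Set V) →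
      fn s ≠ fn (s + l) →
      (∀ j, 0 < j → j < l → fn (s + j) ∉ ({v₁, vB, vC} : Set V)) → Odd l := by
    intro s l hl0 hlm hx hy hxy hmid
    have hseg : fn s ∈ ({v₁, vB, vC} : Set V) ∧ fn (s + l) ∈ ({v₁, vB, vC} : Set V) ∧
        fn s ≠ fn (s + l) ∧ (fwalk fn hadj' l s).IsPath ∧
        (∀ e ∈ (fwalk fn hadj' l s).edges, e ∈ H.edgeSet) ∧
        ∀ w ∈ ({v₁, vB, vC} : Set V), w ∈ (fwalk fn hadj' l s).support →
          w = fn s ∨ w = fn (s + l) := by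
      refine ⟨hx, hy, hxy, ?_, ?_, ?_⟩
      · rw [Walk.isPath_def]
        exact hnodup l s hlm
      · intro e he
        rw [fwalk_edges] at he
        simp only [List.mem_map, List.mem_range] at he
        obtain ⟨j, hj, rfl⟩ := he
        rw [SimpleGraph.mem_edgeSet]
        have h := hadjf ((s + j : ℕ) : ZMod m)
        rwa [show ((s + j : ℕ) : ZMod m) + 1 = ((s + j + 1 : ℕ) : ZMod m) by
          push_cast; ring] at h
      · intro w hwset hwsupp
        rw [fwalk_support] at hwsupp
        simp only [List.mem_map, List.mem_range] at hwsupp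
        obtain ⟨j, hj, rfl⟩ := hwsupp
        rcases Nat.eq_zero_or_pos j with rfl | hj0
        · exact Or.inl (by rw [Nat.add_zero])
        · rcases Nat.lt_or_ge j l with hjl | hjl
          · exact absurd hwset (hmid j hj0 hjl)
          · exact Or.inr (by rw [show j = l by omega])
    have hw := hodd (fn s) (fn (s + l)) (fwalk fn hadj' l s) hseg
    rwa [fwalk_length] at hw
  have hfneq : ∀ (k : ℕ) (r : ZMod m), k < m → k ≠ r.val → fn k ≠ f r := by
    intro k r hk hne heq
    apply hne
    have h1 : ((k : ℕ) : ZMod m) = r := hfi heq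
    rw [← h1, ZMod.val_natCast, Nat.mod_eq_of_lt hk]
  have hfn0 : fn 0 = v₁ := by
    show f (((0:ℕ) : ZMod m)) = v₁
    rw [Nat.cast_zero, hf0]
  have hfna : fn a = vB := by
    show f (((a:ℕ) : ZMod m)) = vB
    rw [hadef, vcast, hfpB]
  have hfnb : fn b = vC := by
    show f (((b:ℕ) : ZMod m)) = vC
    rw [hbdef, vcast, hfpC]
  have hfnm : fn m = v₁ := by
    show f (((m:ℕ) : ZMod m)) = v₁
    rw [ZMod.natCast_self, hf0]
  have hval0 : (0 : ZMod m).val = 0 := ZMod.val_zero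
  have hnotmem : ∀ k : ℕ, 0 < k → k < m → k ≠ a → k ≠ b →
      fn k ∉ ({v₁, vB, vC} : Set V) := by
    intro k h0 hkm hka hkb
    simp only [Set.mem_insert_iff, Set.mem_singleton_iff, not_or]
    refine ⟨?_, ?_, ?_⟩
    · rw [← hf0]
      exact hfneq k 0 hkm (by omega)
    · rw [← hfpB]
      exact hfneq k pB hkm (by rw [← hadef]; omega)
    · rw [← hfpC]
      exact hfneq k pC hkm (by rw [← hbdef]; omega)
  have hOa : Odd a := by
    refine mkOdd 0 a (by omega) (by omega) ?_ ?_ ?_ ?_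
    · rw [hfn0]; left; rfl
    · rw [Nat.zero_add, hfna]; right; left; rfl
    · rw [hfn0, Nat.zero_add, hfna]; exact h12
    · intro j hj0 hjl
      rw [Nat.zero_add]
      exact hnotmem j hj0 (by omega) (by omega) (by omega)
  have hOba : Odd (b - a) := by
    refine mkOdd a (b - a) (by omega) (by omega) ?_ ?_ ?_ ?_
    · rw [hfna]; right; left; rfl
    · rw [show a + (b - a) = b by omega, hfnb]; right; right; rfl
    · rw [hfna, show a + (b - a) = b by omega, hfnb]; exact h23
    · intro j hj0 hjl
      exact hnotmem (a + j) (by omega) (by omega) (by omega) (by omega)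
  have hOmb : Odd (m - b) := by
    refine mkOdd b (m - b) (by omega) (by omega) ?_ ?_ ?_ ?_
    · rw [hfnb]; right; right; rfl
    · rw [show b + (m - b) = m by omega, hfnm]; left; rfl
    · rw [hfnb, show b + (m - b) = m by omega, hfnm]; exact h13.symm
    · intro j hj0 hjl
      exact hnotmem (b + j) (by omega) (by omega) (by omega) (by omega)
  have hmo : Odd m := by
    rw [Nat.odd_iff] at hOa hOba hOmb ⊢
    omega
  have hbev : b % 2 = 0 := by
    rw [Nat.odd_iff] at hOa hOba hOmb
    omega
  have haodd : a % 2 = 1 := Nat.odd_iff.mp hOa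
  obtain ⟨M₁, hM₁, hv₁, hcov₁⟩ := match_lemma hm hmo hfb hHG hadjf 0
  obtain ⟨M₂, hM₂, hv₂, hcov₂⟩ := match_lemma hm hmo hfb hHG hadjf pB
  obtain ⟨M₃, hM₃, hv₃, hcov₃⟩ := match_lemma hm hmo hfb hHG hadjf pC
  have hsubval : ∀ (i r : ZMod m), r.val ≤ i.val → (i - r).val = i.val - r.val := by
    intro i r h
    have h1 : (((i.val - r.val : ℕ)) : ZMod m) = i - r := by
      rw [Nat.cast_sub h, vcast, vcast]
    rw [← h1, ZMod.val_natCast,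
      Nat.mod_eq_of_lt (by have := ZMod.val_lt i; omega)]
  have hsubval2 : ∀ (i r : ZMod m), i.val < r.val → (i - r).val = i.val + m - r.val := by
    intro i r h
    have hrm := ZMod.val_lt r
    have h1 : (((i.val + m - r.val : ℕ)) : ZMod m) = i - r := by
      rw [Nat.cast_sub (by omega), Nat.cast_add, ZMod.natCast_self, vcast, vcast]
      ring
    rw [← h1, ZMod.val_natCast, Nat.mod_eq_of_lt (by omega)]
  refine ⟨M₁, M₂, M₃, hM₁, hM₂, hM₃, by rw [hv₁, hf0], by rw [hv₂, hfpB],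
    by rw [hv₃, hfpC], ?_⟩
  apply Set.Subset.antisymm
  · intro e he
    rcases he with ((h | h) | h) | h
    · exact M₁.edgeSet_subset h
    · exact M₂.edgeSet_subset h
    · exact M₃.edgeSet_subset h
    · exact h.1
  · intro e he
    by_cases heH : e ∈ H.edgeSet
    · obtain ⟨i, rfl⟩ := hedge e heH
      set k := i.val with hkdef
      have hkm : k < m := ZMod.val_lt _
      rcases Nat.even_or_odd k with hkev | hkodd
      · rw [Nat.even_iff] at hkev
        rcases Nat.lt_or_ge k a with hka | hka
        · -- use M₃
          left; right
          apply hcov₃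
          have hm2 : m % 2 = 1 := Nat.odd_iff.mp hmo
          rw [hsubval2 i pC (by omega), Nat.odd_iff, ← hkdef, ← hbdef]
          omega
        · -- use M₂
          left; left; right
          apply hcov₂
          rw [hsubval i pB (by omega), Nat.odd_iff, ← hkdef, ← hadef]
          omega
      · -- use M₁
        left; left; left
        apply hcov₁
        rw [sub_zero]
        exact hkodd
    · right
      exact ⟨he, heH⟩

end Ham3Aux

/-- If all three segments of `H` determined by `v₁, v₂, v₃` have odd length,
then `(G, H)` has a proper 4-cover. -/
theorem ham3pole_allOddSegments_proper4Cover [Finite V] (G H : SimpleGraph V)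
    (v₁ v₂ v₃ : V) (h : IsHam3Pole G H v₁ v₂ v₃)
    (hodd : ∀ (x y : V) (p : G.Walk x y), IsSegment G H v₁ v₂ v₃ p → Odd p.length) :
    Proper4Cover G H v₁ v₂ v₃ := by
  obtain ⟨hHG, hconn, hreg, h12, h13, h23, -, -, -, -⟩ := h
  obtain ⟨m, f, hm, hfb, hf0, hadjf, hedge⟩ := Ham3Aux.exists_cycle_param hconn hreg v₁
  obtain ⟨pB, hfpB⟩ := hfb.2 v₂
  obtain ⟨pC, hfpC⟩ := hfb.2 v₃
  haveI : NeZero m := ⟨by omega⟩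
  have vcast : ∀ i : ZMod m, ((i.val : ℕ) : ZMod m) = i := ZMod.natCast_rightInverse
  have hne : pB.val ≠ pC.val := by
    intro hv
    apply h23
    rw [← hfpB, ← hfpC, ← vcast pB, ← vcast pC, hv]
  rcases Nat.lt_or_ge pB.val pC.val with hlt | hge
  · obtain ⟨M₁, M₂, M₃, q1, q2, q3, q4, q5, q6, q7⟩ :=
      Ham3Aux.key G H v₁ v₂ v₃ hm hfb hf0 hadjf hedge hHG h12 h13 h23 hfpB hfpC hlt
        (fun x y p hs => hodd x y p hs)
    exact ⟨M₁, M₂, M₃, q1, q2, q3, q4, q5, q6, q7⟩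
  · have hlt : pC.val < pB.val := by omega
    have hset : ({v₁, v₃, v₂} : Set V) = {v₁, v₂, v₃} := by
      rw [Set.pair_comm v₃ v₂]
    have hodd' : ∀ (x y : V) (p : G.Walk x y),
        (x ∈ ({v₁, v₃, v₂} : Set V) ∧ y ∈ ({v₁, v₃, v₂} : Set V) ∧ x ≠ y ∧
          p.IsPath ∧ (∀ e ∈ p.edges, e ∈ H.edgeSet) ∧
          ∀ w ∈ ({v₁, v₃, v₂} : Set V), w ∈ p.support → w = x ∨ w = y) →
          Odd p.length := by
      intro x y p hs
      apply hodd x y p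
      refine ⟨by rw [← hset]; exact hs.1, by rw [← hset]; exact hs.2.1, hs.2.2.1,
        hs.2.2.2.1, hs.2.2.2.2.1, ?_⟩
      intro w hw
      exact hs.2.2.2.2.2 w (by rw [hset]; exact hw)
    obtain ⟨M₁, M₂, M₃, q1, q2, q3, q4, q5, q6, q7⟩ :=
      Ham3Aux.key G H v₁ v₃ v₂ hm hfb hf0 hadjf hedge hHG h13 h12 (Ne.symm h23)
        hfpC hfpB hlt hodd'
    refine ⟨M₁, M₃, M₂, q1, q3, q2, q4, q6, q5, ?_⟩
    rw [Set.union_right_comm M₁.edgeSet M₃.edgeSet M₂.edgeSet]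
    exact q7
end

section
/- Let (G, H) be an encoded Hamiltonian cubic 3-pole with distinguished degree-2 vertices v₁, v₂, v₃, and let S be any segment of H determined by v₁, v₂, v₃. Then the number of exterior chords for S is congruent to |S| − 1 modulo 2. In particular, a segment of even length has an odd number of exterior chords, and a segment with exactly one exterior chord has even length. -/
open SimpleGraph

variable {V : Type*}

/-- For any segment `S` of an encoded Hamiltonian cubic 3-pole, the number of
exterior chords for `S` is congruent to `|S| - 1` modulo 2; in particular an
even segment has an odd number of exterior chords, and a segment with exactly
one exterior chord has even length. -/
theorem ham3pole_exteriorChord_parity [Finite V] (G H : SimpleGraph V)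
    (v₁ v₂ v₃ : V) (h : IsHam3Pole G H v₁ v₂ v₃)
    (x y : V) (p : G.Walk x y) (hseg : IsSegment G H v₁ v₂ v₃ p) :
    {e : Sym2 V | IsExteriorChord G H p e}.ncard ≡ p.length - 1 [MOD 2] ∧
    (Even p.length → Odd {e : Sym2 V | IsExteriorChord G H p e}.ncard) ∧
    ({e : Sym2 V | IsExteriorChord G H p e}.ncard = 1 → Even p.length) := by
  classical
  cases nonempty_fintype V
  obtain ⟨hHG, -, hHdeg, -, -, -, hd1, hd2, hd3, hd⟩ := h
  obtain ⟨hx, hy, hxy, hpath, -, hmem⟩ := hseg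
  -- at the distinguished vertices, G- and H-neighborhoods coincide (no chords there)
  have hend : ∀ z ∈ ({v₁, v₂, v₃} : Set V), H.neighborSet z = G.neighborSet z := by
    intro z hz
    have hsub : H.neighborSet z ⊆ G.neighborSet z := fun w hw => hHG hw
    have hc : (G.neighborSet z).ncard ≤ (H.neighborSet z).ncard := by
      rw [hHdeg z]
      simp at hz
      rcases hz with rfl | rfl | rfl
      · rw [hd1]
      · rw [hd2]
      · rw [hd3]
    exact Set.eq_of_subset_of_ncard_le hsub hc (Set.toFinite _)
  -- internal vertices of p are not among v₁, v₂, v₃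
  have hiv : ∀ v : V, v ∈ p.support → v ≠ x → v ≠ y → v ≠ v₁ ∧ v ≠ v₂ ∧ v ≠ v₃ := by
    intro v hv hvx hvy
    refine ⟨?_, ?_, ?_⟩ <;> rintro rfl
    · exact (hmem _ (by simp) hv).elim hvx hvy
    · exact (hmem _ (by simp) hv).elim hvx hvy
    · exact (hmem _ (by simp) hv).elim hvx hvy
  -- each internal vertex has a unique chord-neighbor
  have hone : ∀ v : V, v ∈ p.support → v ≠ x → v ≠ y →
      ∃ w, G.neighborSet v \ H.neighborSet v = {w} := by
    intro v hv hvx hvy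
    obtain ⟨h1, h2, h3⟩ := hiv v hv hvx hvy
    have hsub : H.neighborSet v ⊆ G.neighborSet v := fun w hw => hHG hw
    have hcard : (G.neighborSet v \ H.neighborSet v).ncard = 1 := by
      rw [Set.ncard_diff hsub (Set.toFinite _), hd v h1 h2 h3, hHdeg v]
    exact Set.ncard_eq_one.mp hcard
  have hone' : ∀ v : V, ∃ w, v ∈ p.support → v ≠ x → v ≠ y →
      G.neighborSet v \ H.neighborSet v = {w} := by
    intro v
    by_cases hv : v ∈ p.support ∧ v ≠ x ∧ v ≠ y
    · obtain ⟨w, hw⟩ := hone v hv.1 hv.2.1 hv.2.2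
      exact ⟨w, fun _ _ _ => hw⟩
    · exact ⟨x, fun h1 h2 h3 => absurd ⟨h1, h2, h3⟩ hv⟩
  choose c hc using hone'
  have hcmem : ∀ v, v ∈ p.support → v ≠ x → v ≠ y →
      G.Adj v (c v) ∧ ¬ H.Adj v (c v) := by
    intro v h1 h2 h3
    have hm : c v ∈ G.neighborSet v \ H.neighborSet v := by
      rw [hc v h1 h2 h3]; exact rfl
    exact ⟨hm.1, hm.2⟩
  have hcuniq : ∀ v, v ∈ p.support → v ≠ x → v ≠ y →
      ∀ w, G.Adj v w → ¬ H.Adj v w → w = c v := by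
    intro v h1 h2 h3 w hGw hHw
    have hm : w ∈ G.neighborSet v \ H.neighborSet v := ⟨hGw, hHw⟩
    rw [hc v h1 h2 h3] at hm
    exact hm
  -- the chord-neighbor of an internal vertex is never a distinguished vertex
  have hcne : ∀ v, v ∈ p.support → v ≠ x → v ≠ y →
      ∀ z ∈ ({v₁, v₂, v₃} : Set V), c v ≠ z := by
    intro v h1 h2 h3 z hz hcz
    obtain ⟨hGadj, hHadj⟩ := hcmem v h1 h2 h3
    subst hcz
    have hv : v ∈ G.neighborSet (c v) := hGadj.symm
    rw [← hend _ hz] at hv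
    exact hHadj (SimpleGraph.Adj.symm hv)
  have hnodup : p.support.Nodup := hpath.support_nodup
  set I : Finset V := p.support.toFinset.filter (fun v => v ≠ x ∧ v ≠ y) with hI
  have hmemI : ∀ v, v ∈ I ↔ v ∈ p.support ∧ v ≠ x ∧ v ≠ y := by
    intro v; simp [hI]
  have hIcard : I.card = p.length - 1 := by
    have h1 : I = p.support.toFinset \ {x, y} := by
      ext v
      simp [hI, Finset.mem_sdiff, not_or, and_assoc]
    have hsub : ({x, y} : Finset V) ⊆ p.support.toFinset := by
      intro z hz
      simp only [Finset.mem_insert, Finset.mem_singleton] at hz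
      rcases hz with rfl | rfl
      · simp [p.start_mem_support]
      · simp [p.end_mem_support]
    rw [h1, Finset.card_sdiff_of_subset hsub, List.toFinset_card_of_nodup hnodup,
      SimpleGraph.Walk.length_support,
      Finset.card_insert_of_notMem (by simpa using hxy), Finset.card_singleton]
    omega
  set Iext := I.filter (fun v => c v ∉ p.support) with hIe
  set Iint := I.filter (fun v => c v ∈ p.support) with hIi
  have hsplit : Iint.card + Iext.card = I.card := by
    rw [hIi, hIe]
    exact Finset.card_filter_add_card_filter_not (fun v => c v ∈ p.support)
  -- exterior chords are exactly the image of Iext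
  have hEset : {e : Sym2 V | IsExteriorChord G H p e}
      = ↑(Iext.image (fun v => s(v, c v))) := by
    ext e
    simp only [Set.mem_setOf_eq, Finset.coe_image, Set.mem_image, Finset.mem_coe,
      hIe, Finset.mem_filter]
    constructor
    · rintro ⟨⟨heG, heH⟩, u, w, rfl, hu, hw, hux, huy⟩
      have hGadj : G.Adj u w := heG
      have hHadj : ¬ H.Adj u w := fun ha => heH ha
      have hwc : w = c u := hcuniq u hu hux huy w hGadj hHadj
      refine ⟨u, ⟨(hmemI u).mpr ⟨hu, hux, huy⟩, ?_⟩, by rw [hwc]⟩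
      rw [← hwc]; exact hw
    · rintro ⟨v, ⟨hvI, hcv⟩, rfl⟩
      obtain ⟨hv, hvx, hvy⟩ := (hmemI v).mp hvI
      obtain ⟨hGadj, hHadj⟩ := hcmem v hv hvx hvy
      exact ⟨⟨hGadj, fun ha => hHadj ha⟩, v, c v, rfl, hv, hcv, hvx, hvy⟩
  have hcount : {e : Sym2 V | IsExteriorChord G H p e}.ncard = Iext.card := by
    rw [hEset, Set.ncard_coe_finset]
    apply Finset.card_image_of_injOn
    intro a ha b hb hab
    rw [Sym2.eq_iff] at hab
    rcases hab with ⟨rfl, -⟩ | ⟨h1, h2⟩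
    · rfl
    · exfalso
      obtain ⟨haI, hca⟩ := Finset.mem_filter.mp ha
      obtain ⟨hbI, hcb⟩ := Finset.mem_filter.mp hb
      have hbsupp : b ∈ p.support := ((hmemI b).mp hbI).1
      rw [← h2] at hbsupp
      exact hca hbsupp
  -- the chord map is a fixed-point-free involution on Iint
  have hswap : ∀ v ∈ Iint, c v ∈ Iint ∧ c (c v) = v := by
    intro v hv
    obtain ⟨hvI, hcv⟩ := Finset.mem_filter.mp hv
    obtain ⟨hvs, hvx, hvy⟩ := (hmemI v).mp hvI
    obtain ⟨hGadj, hHadj⟩ := hcmem v hvs hvx hvy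
    have hcx : c v ≠ x := hcne v hvs hvx hvy x hx
    have hcy : c v ≠ y := hcne v hvs hvx hvy y hy
    have hccv : c (c v) = v :=
      (hcuniq (c v) hcv hcx hcy v hGadj.symm (fun ha => hHadj ha.symm)).symm
    refine ⟨Finset.mem_filter.mpr ⟨(hmemI (c v)).mpr ⟨hcv, hcx, hcy⟩, ?_⟩, hccv⟩
    rw [hccv]; exact hvs
  have heven : Even Iint.card := by
    have hmap : ∀ v ∈ Iint, (fun v => s(v, c v)) v ∈ Iint.image (fun v => s(v, c v)) :=
      fun v hv => Finset.mem_image_of_mem _ hv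
    rw [Finset.card_eq_sum_card_fiberwise hmap]
    apply Finset.even_sum
    intro e he
    obtain ⟨v, hv, rfl⟩ := Finset.mem_image.mp he
    obtain ⟨hcv, hccv⟩ := hswap v hv
    obtain ⟨hvI, hcvs⟩ := Finset.mem_filter.mp hv
    obtain ⟨hvs, hvx, hvy⟩ := (hmemI v).mp hvI
    have hvne : v ≠ c v := (hcmem v hvs hvx hvy).1.ne
    have hfib : Iint.filter (fun u => s(u, c u) = s(v, c v)) = {v, c v} := by
      ext u
      simp only [Finset.mem_filter, Finset.mem_insert, Finset.mem_singleton]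
      constructor
      · rintro ⟨hu, huv⟩
        rw [Sym2.eq_iff] at huv
        rcases huv with ⟨h1, -⟩ | ⟨h1, -⟩
        · exact Or.inl h1
        · exact Or.inr h1
      · rintro (rfl | rfl)
        · exact ⟨hv, rfl⟩
        · refine ⟨hcv, ?_⟩
          rw [hccv, Sym2.eq_swap]
    rw [hfib, Finset.card_insert_of_notMem (by simpa using hvne), Finset.card_singleton]
    exact even_two
  have hne0 : p.length ≠ 0 := by
    cases p with
    | nil => exact absurd rfl hxy
    | cons h q => simp
  obtain ⟨k, hk⟩ := heven
  have hS : Iint.card + Iext.card = p.length - 1 := by rw [hsplit, hIcard]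
  have hlen : 1 ≤ p.length := Nat.one_le_iff_ne_zero.mpr hne0
  rw [hcount]
  refine ⟨?_, ?_, ?_⟩
  · simp only [Nat.ModEq]
    omega
  · intro hev
    rw [Nat.even_iff] at hev
    rw [Nat.odd_iff]
    omega
  · intro h1
    rw [Nat.even_iff]
    omega
end
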